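/- Let λ ∈ ℂ, n ∈ ℝ, and let M be the 4×4 matrix with rows (0, n, 1, 0), (−n, 0, 0, 1), (−2a, 0, 0, n), (0, −b, −n, 0). If λ is an eigenvalue of M, then the vector (2nλ, λ² + 2a − n², nλ² − 2an + n³, λ³ + (2a + n²)λ)ᵀ lies in the kernel of M − λI₄ (and is an eigenvector whenever it is nonzero). -/

import Mathlib

theorem stmt_14 (n a b : ℝ) (lam : ℂ)
    (M : Matrix (Fin 4) (Fin 4) ℂ)
    (hM : M = !![0, (n : ℂ), 1, 0;
                 -(n : ℂ), 0, 0, 1;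
                 -2 * (a : ℂ), 0, 0, (n : ℂ);
                 0, -(b : ℂ), -(n : ℂ), 0])
    (hlam : (Matrix.charpoly M).IsRoot lam) :
    (M - lam • (1 : Matrix (Fin 4) (Fin 4) ℂ)).mulVec
      ![2 * n * lam,
        lam ^ 2 + 2 * a - n ^ 2,
        n * lam ^ 2 - 2 * a * n + n ^ 3,
        lam ^ 3 + (2 * a + n ^ 2) * lam] = 0 := by
  have hp : lam ^ 4 + (2 * a + b + 2 * n ^ 2) * lam ^ 2
      + (n ^ 4 - 2 * a * n ^ 2 - b * n ^ 2 + 2 * a * b) = 0 := by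
    have h := hlam
    rw [Polynomial.IsRoot, Matrix.charpoly, ← Polynomial.coe_evalRingHom,
      RingHom.map_det, RingHom.mapMatrix_apply] at h
    have he : (Matrix.charmatrix M).map (Polynomial.evalRingHom lam) =
        !![lam, -(n : ℂ), -1, 0;
           (n : ℂ), lam, 0, -1;
           2 * (a : ℂ), 0, lam, -(n : ℂ);
           0, (b : ℂ), (n : ℂ), lam] := by
      ext i j
      fin_cases i <;> fin_cases j <;>
        simp [Matrix.charmatrix_apply, hM, Matrix.one_apply]
    rw [he] at h
    simp [Matrix.det_succ_row_zero, Fin.sum_univ_succ, Fin.succAbove] at h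
    linear_combination h
  funext i
  fin_cases i
  · simp [hM, Matrix.mulVec, dotProduct, Fin.sum_univ_four, Matrix.one_apply]
    ring
  · simp [hM, Matrix.mulVec, dotProduct, Fin.sum_univ_four, Matrix.one_apply]
    ring
  · simp [hM, Matrix.mulVec, dotProduct, Fin.sum_univ_four, Matrix.one_apply]
    ring
  · simp [hM, Matrix.mulVec, dotProduct, Fin.sum_univ_four, Matrix.one_apply]
    linear_combination -hp
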